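/- The Mellin transform of the complementary error function erfc equals 2^{-s} Γ(s) / Γ(1 + s/2) for all complex s with Re(s) > 0. -/

import Mathlib

open MeasureTheory Complex Set Filter Asymptotics Topology

/-- The complementary error function `erfc(x) = (2/√π) ∫_x^∞ e^{-t²} dt`. -/
noncomputable def erfc (x : ℝ) : ℝ :=
  2 / Real.sqrt Real.pi * ∫ t in Set.Ioi x, Real.exp (-t ^ 2)

namespace ErfcAux

lemma integrable_gauss : Integrable (fun t : ℝ => Real.exp (-t ^ 2)) := by
  simpa using integrable_exp_neg_mul_sq one_pos

lemma continuous_gauss : Continuous (fun t : ℝ => Real.exp (-t ^ 2)) := by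
  continuity

lemma erfc_eq (x : ℝ) : erfc x = 2 / Real.sqrt Real.pi *
    ((∫ t in Ioi (0:ℝ), Real.exp (-t ^ 2)) - ∫ t in (0:ℝ)..x, Real.exp (-t ^ 2)) := by
  have hg := integrable_gauss
  unfold erfc
  congr 1
  rw [← intervalIntegral.integral_Iic_sub_Iic hg.integrableOn hg.integrableOn]
  have h1 : ∀ a : ℝ, (∫ t in Ioi a, Real.exp (-t ^ 2)) =
      (∫ t : ℝ, Real.exp (-t ^ 2)) - ∫ t in Iic a, Real.exp (-t ^ 2) := by
    intro a
    rw [← intervalIntegral.integral_Iic_add_Ioi hg.integrableOn hg.integrableOn]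
    ring
  rw [h1 x, h1 0]
  ring

lemma erfc_hasDerivAt (x : ℝ) :
    HasDerivAt erfc (-(2 / Real.sqrt Real.pi * Real.exp (-x ^ 2))) x := by
  have hg := integrable_gauss
  have h : HasDerivAt (fun y : ℝ => ∫ t in (0:ℝ)..y, Real.exp (-t ^ 2))
      (Real.exp (-x ^ 2)) x :=
    intervalIntegral.integral_hasDerivAt_right hg.intervalIntegrable
      (continuous_gauss.stronglyMeasurableAtFilter _ _) continuous_gauss.continuousAt
  have h2 : HasDerivAt (fun y : ℝ => 2 / Real.sqrt Real.pi *
      ((∫ t in Ioi (0:ℝ), Real.exp (-t ^ 2)) - ∫ t in (0:ℝ)..y, Real.exp (-t ^ 2)))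
      (2 / Real.sqrt Real.pi * (0 - Real.exp (-x ^ 2))) x :=
    ((hasDerivAt_const x _).sub h).const_mul _
  have heq : erfc = fun y : ℝ => 2 / Real.sqrt Real.pi *
      ((∫ t in Ioi (0:ℝ), Real.exp (-t ^ 2)) - ∫ t in (0:ℝ)..y, Real.exp (-t ^ 2)) :=
    funext erfc_eq
  rw [heq]
  convert h2 using 1
  ring

lemma erfc_continuous : Continuous erfc :=
  continuous_iff_continuousAt.2 fun x => (erfc_hasDerivAt x).continuousAt

lemma erfc_nonneg (x : ℝ) : 0 ≤ erfc x := by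
  refine mul_nonneg (by positivity) ?_
  exact setIntegral_nonneg measurableSet_Ioi fun t _ => (Real.exp_pos _).le

lemma erfc_le (x : ℝ) (hx : 1 ≤ x) : erfc x ≤ 2 / Real.sqrt Real.pi * Real.exp (-x) := by
  unfold erfc
  have hint : IntegrableOn (fun t : ℝ => Real.exp (-t)) (Ioi x) := by
    simpa using exp_neg_integrableOn_Ioi x one_pos
  have h1 : (∫ t in Ioi x, Real.exp (-t ^ 2)) ≤ ∫ t in Ioi x, Real.exp (-t) := by
    refine setIntegral_mono_on integrable_gauss.integrableOn hint measurableSet_Ioi ?_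
    intro t ht
    have h1t : 1 ≤ t := hx.trans (le_of_lt ht)
    have : t ≤ t ^ 2 := by nlinarith
    exact Real.exp_le_exp.2 (by linarith)
  rw [integral_exp_neg_Ioi] at h1
  have hc : (0:ℝ) ≤ 2 / Real.sqrt Real.pi := by positivity
  exact mul_le_mul_of_nonneg_left h1 hc

lemma erfc_isBigO_top : (fun x : ℝ => (erfc x : ℂ)) =O[atTop] fun t => Real.exp (-1 * t) := by
  refine IsBigO.of_bound (2 / Real.sqrt Real.pi) ?_
  filter_upwards [eventually_ge_atTop (1:ℝ)] with x hx
  have h1 : ‖(erfc x : ℂ)‖ = erfc x := by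
    rw [Complex.norm_real, Real.norm_eq_abs, _root_.abs_of_nonneg (erfc_nonneg x)]
  have h2 : ‖Real.exp (-1 * x)‖ = Real.exp (-x) := by
    rw [Real.norm_eq_abs, abs_of_pos (Real.exp_pos _), neg_one_mul]
  rw [h1, h2]
  exact erfc_le x hx

lemma erfc_isBigO_zero : (fun x : ℝ => (erfc x : ℂ)) =O[𝓝[>] (0:ℝ)] (· ^ (-(0:ℝ))) := by
  have h : Tendsto (fun x : ℝ => (erfc x : ℂ)) (𝓝[>] (0:ℝ)) (𝓝 (erfc 0)) :=
    ((Complex.continuous_ofReal.comp erfc_continuous).tendsto 0).mono_left nhdsWithin_le_nhds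
  simpa [neg_zero, Real.rpow_zero] using h.isBigO_one ℝ

lemma mc_erfc {s : ℂ} (hs : 0 < s.re) : MellinConvergent (fun x : ℝ => (erfc x : ℂ)) s :=
  mellinConvergent_of_isBigO_rpow_exp one_pos
    ((Complex.continuous_ofReal.comp erfc_continuous).locallyIntegrable.locallyIntegrableOn _)
    erfc_isBigO_top erfc_isBigO_zero hs

lemma gauss_isBigO_top :
    (fun x : ℝ => (Real.exp (-x ^ 2) : ℂ)) =O[atTop] fun t => Real.exp (-1 * t) := by
  refine IsBigO.of_bound 1 ?_
  filter_upwards [eventually_ge_atTop (1:ℝ)] with x hx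
  have h1 : ‖(Real.exp (-x ^ 2) : ℂ)‖ = Real.exp (-x ^ 2) := by
    rw [Complex.norm_real, Real.norm_eq_abs, abs_of_pos (Real.exp_pos _)]
  have h2 : ‖Real.exp (-1 * x)‖ = Real.exp (-x) := by
    rw [Real.norm_eq_abs, abs_of_pos (Real.exp_pos _), neg_one_mul]
  rw [h1, h2, one_mul]
  exact Real.exp_le_exp.2 (by nlinarith)

lemma gauss_isBigO_zero :
    (fun x : ℝ => (Real.exp (-x ^ 2) : ℂ)) =O[𝓝[>] (0:ℝ)] (· ^ (-(0:ℝ))) := by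
  have h : Tendsto (fun x : ℝ => (Real.exp (-x ^ 2) : ℂ)) (𝓝[>] (0:ℝ))
      (𝓝 (Real.exp (-(0:ℝ) ^ 2))) :=
    ((Complex.continuous_ofReal.comp continuous_gauss).tendsto 0).mono_left nhdsWithin_le_nhds
  simpa [neg_zero, Real.rpow_zero] using h.isBigO_one ℝ

lemma mc_gauss {w : ℂ} (hw : 0 < w.re) :
    MellinConvergent (fun x : ℝ => (Real.exp (-x ^ 2) : ℂ)) w :=
  mellinConvergent_of_isBigO_rpow_exp one_pos
    ((Complex.continuous_ofReal.comp continuous_gauss).locallyIntegrable.locallyIntegrableOn _)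
    gauss_isBigO_top gauss_isBigO_zero hw

lemma mellin_exp {w : ℂ} (hw : 0 < w.re) :
    mellin (fun x : ℝ => (Real.exp (-x) : ℂ)) w = Complex.Gamma w := by
  rw [Complex.Gamma_eq_integral hw]
  rw [Complex.GammaIntegral]
  refine setIntegral_congr_fun measurableSet_Ioi fun x hx => ?_
  rw [smul_eq_mul, mul_comm]

lemma mellin_gauss {w : ℂ} (hw : 0 < w.re) :
    mellin (fun x : ℝ => (Real.exp (-x ^ 2) : ℂ)) w = Complex.Gamma (w / 2) / 2 := by
  have h3 : mellin (fun x : ℝ => (Real.exp (-x ^ 2) : ℂ)) w =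
      mellin (fun t : ℝ => (Real.exp (-(t ^ (2:ℝ))) : ℂ)) w := by
    refine setIntegral_congr_fun measurableSet_Ioi fun x hx => ?_
    simp only [Real.rpow_two]
  have h2 := mellin_comp_rpow (fun x : ℝ => (Real.exp (-x) : ℂ)) w (2:ℝ)
  have hw2 : 0 < (w / ((2:ℝ):ℂ)).re := by
    rw [Complex.div_ofReal_re]
    positivity
  rw [h3, h2, mellin_exp hw2]
  rw [show ((2:ℝ):ℂ) = (2:ℂ) by norm_num]
  rw [Complex.real_smul]
  norm_num
  ring

end ErfcAux

open ErfcAux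

/-- The Mellin transform of `erfc` is `2^{-s} Γ(s) / Γ(1 + s/2)` for `Re(s) > 0`. -/
theorem mellin_erfc (s : ℂ) (hs : 0 < s.re) :
    mellin (fun x : ℝ => (erfc x : ℂ)) s =
      (2 : ℂ) ^ (-s) * Complex.Gamma s / Complex.Gamma (1 + s / 2) := by
  have hs0 : s ≠ 0 := fun h => by simp [h] at hs
  have hπ : (0:ℝ) < Real.sqrt Real.pi := Real.sqrt_pos.2 Real.pi_pos
  set c : ℝ := 2 / Real.sqrt Real.pi with hc
  have hcpos : (0:ℝ) < c := by positivity
  -- the functions involved in integration by parts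
  set u : ℝ → ℂ := fun x => (x:ℂ) ^ s / s with hu_def
  set u' : ℝ → ℂ := fun x => (x:ℂ) ^ (s - 1) with hu'_def
  set v : ℝ → ℂ := fun x => (erfc x : ℂ) with hv_def
  set v' : ℝ → ℂ := fun x => ((-(c * Real.exp (-x ^ 2)) : ℝ) : ℂ) with hv'_def
  have hu : ∀ x ∈ Ioi (0:ℝ), HasDerivAt u (u' x) x := by
    intro x hx
    have hr : s - 1 ≠ -1 := fun h => hs0 (by linear_combination h)
    have := hasDerivAt_ofReal_cpow_const' (ne_of_gt (mem_Ioi.mp hx)) hr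
    simpa [sub_add_cancel] using this
  have hv : ∀ x ∈ Ioi (0:ℝ), HasDerivAt v (v' x) x := fun x _ =>
    (erfc_hasDerivAt x).ofReal_comp
  -- integrability of u * v'
  have hgauss := mc_gauss (w := s + 1) (by simp [Complex.add_re]; linarith)
  have huv' : IntegrableOn (u * v') (Ioi (0:ℝ)) := by
    have heq : (u * v') = fun x : ℝ => ((-(c:ℂ)) / s) * ((x:ℂ) ^ (s + 1 - 1) • (Real.exp (-x ^ 2) : ℂ)) := by
      funext x
      simp only [Pi.mul_apply, hu_def, hv'_def, smul_eq_mul]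
      push_cast
      rw [show s + 1 - 1 = s by ring]
      ring
    rw [heq]
    exact (hgauss.const_mul _)
  -- integrability of u' * v
  have hu'v : IntegrableOn (u' * v) (Ioi (0:ℝ)) := by
    have := mc_erfc hs
    have heq : (u' * v) = fun t : ℝ => (t:ℂ) ^ (s - 1) • (erfc t : ℂ) := by
      funext x; simp [hu'_def, hv_def, smul_eq_mul]
    rw [heq]
    exact this
  -- boundary limits
  have h_zero : Tendsto (u * v) (𝓝[>] (0:ℝ)) (𝓝 0) := by
    have hb : ∀ᶠ x : ℝ in 𝓝[>] (0:ℝ), ‖(u * v) x‖ ≤ (|erfc 0| + 1) / ‖s‖ * x ^ s.re := by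
      have hev : ∀ᶠ x : ℝ in 𝓝[>] (0:ℝ), |erfc x| ≤ |erfc 0| + 1 := by
        have : Tendsto (fun x : ℝ => |erfc x|) (𝓝[>] (0:ℝ)) (𝓝 (|erfc 0|)) :=
          ((erfc_continuous.abs.tendsto 0).mono_left nhdsWithin_le_nhds)
        exact this.eventually_le_const (by linarith [abs_nonneg (erfc 0)])
      filter_upwards [hev, self_mem_nhdsWithin] with x hx hx0
      have hx0' : (0:ℝ) < x := hx0
      simp only [Pi.mul_apply, hu_def, hv_def, norm_mul, norm_div]
      rw [Complex.norm_real, Complex.norm_cpow_eq_rpow_re_of_pos hx0']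
      rw [Real.norm_eq_abs]
      calc x ^ s.re / ‖s‖ * |erfc x| ≤ x ^ s.re / ‖s‖ * (|erfc 0| + 1) := by
            apply mul_le_mul_of_nonneg_left hx (by positivity)
        _ = (|erfc 0| + 1) / ‖s‖ * x ^ s.re := by ring
    have hg : Tendsto (fun x : ℝ => (|erfc 0| + 1) / ‖s‖ * x ^ s.re) (𝓝[>] (0:ℝ)) (𝓝 0) := by
      have : Tendsto (fun x : ℝ => x ^ s.re) (𝓝[>] (0:ℝ)) (𝓝 ((0:ℝ) ^ s.re)) :=
        ((Real.continuousAt_rpow_const 0 s.re (Or.inr hs.le)).tendsto).mono_left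
          nhdsWithin_le_nhds
      rw [Real.zero_rpow (ne_of_gt hs)] at this
      simpa using this.const_mul ((|erfc 0| + 1) / ‖s‖)
    exact squeeze_zero_norm' hb hg
  have h_infty : Tendsto (u * v) atTop (𝓝 0) := by
    have hb : ∀ᶠ x : ℝ in atTop, ‖(u * v) x‖ ≤ c / ‖s‖ * (x ^ s.re * Real.exp (-1 * x)) := by
      filter_upwards [eventually_ge_atTop (1:ℝ)] with x hx
      have hx0' : (0:ℝ) < x := lt_of_lt_of_le one_pos hx
      simp only [Pi.mul_apply, hu_def, hv_def, norm_mul, norm_div]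
      rw [Complex.norm_real, Complex.norm_cpow_eq_rpow_re_of_pos hx0']
      rw [Real.norm_eq_abs, _root_.abs_of_nonneg (erfc_nonneg x)]
      have h1 : erfc x ≤ c * Real.exp (-x) := erfc_le x hx
      calc x ^ s.re / ‖s‖ * erfc x ≤ x ^ s.re / ‖s‖ * (c * Real.exp (-x)) := by
            apply mul_le_mul_of_nonneg_left h1 (by positivity)
        _ = c / ‖s‖ * (x ^ s.re * Real.exp (-1 * x)) := by rw [neg_one_mul]; ring
    have hg : Tendsto (fun x : ℝ => c / ‖s‖ * (x ^ s.re * Real.exp (-1 * x))) atTop (𝓝 0) := by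
      have := tendsto_rpow_mul_exp_neg_mul_atTop_nhds_zero s.re 1 one_pos
      simpa using this.const_mul (c / ‖s‖)
    exact squeeze_zero_norm' hb hg
  -- integration by parts
  have hIBP := integral_Ioi_mul_deriv_eq_deriv_mul hu hv huv' hu'v h_zero h_infty
  -- value of ∫ u v'
  have hval : (∫ x in Ioi (0:ℝ), u x * v' x) =
      ((-(c:ℂ)) / s) * (Complex.Gamma ((s + 1) / 2) / 2) := by
    have heq : (fun x : ℝ => u x * v' x) =
        fun x : ℝ => ((-(c:ℂ)) / s) * ((x:ℂ) ^ (s + 1 - 1) • (Real.exp (-x ^ 2) : ℂ)) := by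
      funext x
      simp only [hu_def, hv'_def, smul_eq_mul]
      push_cast
      rw [show s + 1 - 1 = s by ring]
      ring
    rw [heq, integral_const_mul]
    congr 1
    have := mellin_gauss (w := s + 1) (by simp [Complex.add_re]; linarith)
    rw [← this]
    rfl
  have hmel : mellin (fun x : ℝ => (erfc x : ℂ)) s = ∫ x in Ioi (0:ℝ), u' x * v x := by
    simp only [mellin, hu'_def, hv_def, smul_eq_mul]
  have hfin : (∫ x in Ioi (0:ℝ), u' x * v x) = (c:ℂ) / s * (Complex.Gamma ((s + 1) / 2) / 2) := by
    rw [hval] at hIBP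
    linear_combination hIBP
  rw [hmel, hfin]
  -- now pure Gamma algebra
  have hsπ : ((Real.sqrt Real.pi : ℝ) : ℂ) ≠ 0 := by
    exact_mod_cast ne_of_gt hπ
  have hs2 : s / 2 ≠ 0 := div_ne_zero hs0 two_ne_zero
  have hΓhalf : Complex.Gamma (1 + s / 2) = s / 2 * Complex.Gamma (s / 2) := by
    rw [add_comm, Complex.Gamma_add_one _ hs2]
  have hA : Complex.Gamma (s / 2) ≠ 0 := by
    refine Complex.Gamma_ne_zero_of_re_pos ?_
    rw [show (2:ℂ) = ((2:ℝ):ℂ) by norm_num, Complex.div_ofReal_re]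
    positivity
  have hdup : Complex.Gamma (s / 2) * Complex.Gamma ((s + 1) / 2) =
      Complex.Gamma s * (2:ℂ) ^ ((1:ℂ) - s) * (Real.sqrt Real.pi : ℂ) := by
    have h := Complex.Gamma_mul_Gamma_add_half (s / 2)
    rw [show 2 * (s / 2) = s by ring, show s / 2 + 1 / 2 = (s + 1) / 2 by ring] at h
    exact h
  have h21 : (2:ℂ) ^ ((1:ℂ) - s) = 2 * (2:ℂ) ^ (-s) := by
    rw [show (1:ℂ) - s = 1 + -s by ring, Complex.cpow_add _ _ two_ne_zero, Complex.cpow_one]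
  have hpow : (2:ℂ) ^ (-s) ≠ 0 := by
    intro h
    rw [Complex.cpow_eq_zero_iff] at h
    exact two_ne_zero h.1
  rw [hΓhalf, hc]
  rw [h21] at hdup
  push_cast
  field_simp
  linear_combination hdup
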